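/- For every n ≥ 1 and every k with 0 ≤ k ≤ n-1, the number of permutations of [n] with exactly k successions equals the number of permutations of [n] with exactly k fixed points among positions 1,...,n-1. -/

import Mathlib

open Finset Equiv

/-- Successions: positions `i` (0-based) such that `τ(i)+1 = τ(i+1)`. -/
def Suc {n : ℕ} (τ : Equiv.Perm (Fin n)) : Finset (Fin n) :=
  univ.filter (fun i => ∃ j : Fin n, (j : ℕ) = (i : ℕ) + 1 ∧ (τ i : ℕ) + 1 = (τ j : ℕ))

/-- Non-adjacent successions: positions `i` such that `τ(i)+1` occurs at some
position `j ≥ i+2`. -/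
def najSuc {n : ℕ} (τ : Equiv.Perm (Fin n)) : Finset (Fin n) :=
  univ.filter (fun i => ∃ j : Fin n, (i : ℕ) + 2 ≤ (j : ℕ) ∧ (τ j : ℕ) = (τ i : ℕ) + 1)

/-- Predecessors: positions `i` such that `τ(i)+1` occurs at some earlier position. -/
def PredSet {n : ℕ} (τ : Equiv.Perm (Fin n)) : Finset (Fin n) :=
  univ.filter (fun i => ∃ j : Fin n, j < i ∧ (τ j : ℕ) = (τ i : ℕ) + 1)

/-- Fixed points distinct from the last position. -/
def Fixbar {n : ℕ} (σ : Equiv.Perm (Fin n)) : Finset (Fin n) :=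
  univ.filter (fun i => (i : ℕ) + 1 < n ∧ σ i = i)

/-- Drop values `σ(i) < i` over positions other than the last. -/
def Dropbar {n : ℕ} (σ : Equiv.Perm (Fin n)) : Finset (Fin n) :=
  univ.filter (fun v => ∃ i : Fin n, (i : ℕ) + 1 < n ∧ σ i = v ∧ (σ i : ℕ) < (i : ℕ))

/-- Excedance values `σ(i) > i` over positions other than the last. -/
def Excbar {n : ℕ} (σ : Equiv.Perm (Fin n)) : Finset (Fin n) :=
  univ.filter (fun v => ∃ i : Fin n, (i : ℕ) + 1 < n ∧ σ i = v ∧ (i : ℕ) < (σ i : ℕ))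

-- auxiliary lemmas
section StmtAux
variable {m : ℕ}
lemma mem_Suc {n : ℕ} {τ : Equiv.Perm (Fin n)} {i : Fin n} :
    i ∈ Suc τ ↔ ∃ j : Fin n, (j : ℕ) = (i : ℕ) + 1 ∧ (τ i : ℕ) + 1 = (τ j : ℕ) := by
  simp [Suc]
lemma succAbove_val {m : ℕ} (p : Fin (m+1)) (x : Fin m) :
    ((p.succAbove x : Fin (m+1)) : ℕ) = if (x:ℕ) < (p:ℕ) then (x:ℕ) else (x:ℕ)+1 := by
  by_cases h : (x:ℕ) < (p:ℕ)
  · rw [if_pos h, Fin.succAbove_of_castSucc_lt _ _ (by simpa [Fin.lt_def] using h)]; simp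
  · rw [if_neg h, Fin.succAbove_of_le_castSucc _ _ (by simpa [Fin.le_def] using Nat.le_of_not_lt h)]; simp
lemma succAbove_succ_of {m : ℕ} (p : Fin (m+1)) (u₁ u₂ : Fin m)
    (h : (p.succAbove u₁ : ℕ) + 1 = (p.succAbove u₂ : ℕ)) : (u₁:ℕ) + 1 = (u₂:ℕ) := by
  rw [succAbove_val, succAbove_val] at h; split_ifs at h <;> omega
lemma succAbove_succ_of' {m : ℕ} (p : Fin (m+1)) (u₁ u₂ : Fin m)
    (h : (u₁:ℕ) + 1 = (u₂:ℕ)) (hne : (u₁:ℕ) + 1 ≠ (p:ℕ)) :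
    (p.succAbove u₁ : ℕ) + 1 = (p.succAbove u₂ : ℕ) := by
  rw [succAbove_val, succAbove_val]; split_ifs <;> omega
lemma optionCongr_removeNone {α β : Type*} (e : Option α ≃ Option β) (h : e none = none) :
    Equiv.optionCongr (Equiv.removeNone e) = e := by
  apply Equiv.ext; intro x
  cases x with
  | none => simp [h]
  | some x =>
    have hx : ∃ x', e (some x) = some x' := by
      cases hy : e (some x) with
      | none => exact absurd (e.injective (hy.trans h.symm)) (by simp)
      | some y => exact ⟨y, rfl⟩
    simpa using Equiv.removeNone_some e hx
def Fmap {m : ℕ} (pi : Fin (m+1)) (τ : Equiv.Perm (Fin (m+1))) : Equiv.Perm (Fin m) :=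
  Equiv.removeNone ((finSuccEquiv' pi).symm.trans (τ.trans (finSuccEquiv' (τ pi))))
def Gmap {m : ℕ} (pi : Fin (m+1)) (io : Fin m) (τ' : Equiv.Perm (Fin m)) :
    Equiv.Perm (Fin (m+1)) :=
  (finSuccEquiv' pi).trans ((Equiv.optionCongr τ').trans (finSuccEquiv' ((τ' io).succ)).symm)
lemma Fmap_val {m : ℕ} (pi : Fin (m+1)) (τ : Equiv.Perm (Fin (m+1))) (x : Fin m) :
    τ (pi.succAbove x) = (τ pi).succAbove (Fmap pi τ x) := by
  set e := (finSuccEquiv' pi).symm.trans (τ.trans (finSuccEquiv' (τ pi))) with he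
  have hy : τ (pi.succAbove x) ≠ τ pi := fun h => Fin.succAbove_ne pi x (τ.injective h)
  have hex : ∃ x', e (some x) = some x' := by
    cases hz : e (some x) with
    | none =>
      exfalso; apply hy
      have h2 : (finSuccEquiv' (τ pi)) (τ (pi.succAbove x)) = none := by
        simpa [he, finSuccEquiv'_symm_some] using hz
      have := congrArg (finSuccEquiv' (τ pi)).symm h2
      simpa [finSuccEquiv'_symm_none] using this
    | some z => exact ⟨z, rfl⟩
  have h := Equiv.removeNone_some e hex
  have h2 := congrArg (finSuccEquiv' (τ pi)).symm h
  simpa [he, finSuccEquiv'_symm_some, Fmap] using h2.symm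
lemma Gmap_at {m : ℕ} (pi : Fin (m+1)) (io : Fin m) (τ' : Equiv.Perm (Fin m)) :
    Gmap pi io τ' pi = (τ' io).succ := by
  simp [Gmap, finSuccEquiv'_at, finSuccEquiv'_symm_none]
lemma Gmap_succAbove {m : ℕ} (pi : Fin (m+1)) (io : Fin m) (τ' : Equiv.Perm (Fin m)) (x : Fin m) :
    Gmap pi io τ' (pi.succAbove x) = ((τ' io).succ).succAbove (τ' x) := by
  simp [Gmap, finSuccEquiv'_succAbove, finSuccEquiv'_symm_some]
lemma Fmap_Gmap {m : ℕ} (pi : Fin (m+1)) (io : Fin m) (τ' : Equiv.Perm (Fin m)) :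
    Fmap pi (Gmap pi io τ') = τ' := by
  have hppi : Gmap pi io τ' pi = (τ' io).succ := Gmap_at pi io τ'
  rw [Fmap, hppi]
  have hcomp : (finSuccEquiv' pi).symm.trans ((Gmap pi io τ').trans (finSuccEquiv' ((τ' io).succ)))
      = Equiv.optionCongr τ' := by
    apply Equiv.ext; intro x; simp [Gmap]
  rw [hcomp, Equiv.removeNone_optionCongr]
lemma Gmap_Fmap {m : ℕ} (pi : Fin (m+1)) (io : Fin m) (τ : Equiv.Perm (Fin (m+1)))
    (hio : (Fmap pi τ io).succ = τ pi) :
    Gmap pi io (Fmap pi τ) = τ := by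
  rw [Gmap, hio]
  have hnone : ((finSuccEquiv' pi).symm.trans (τ.trans (finSuccEquiv' (τ pi)))) none = none := by
    simp [finSuccEquiv'_symm_none, finSuccEquiv'_at]
  rw [Fmap, optionCongr_removeNone _ hnone]
  apply Equiv.ext; intro x; simp

lemma succAbove_val_lt {m : ℕ} (p : Fin (m+1)) (x : Fin m) (h : (x:ℕ) < (p:ℕ)) :
    ((p.succAbove x : Fin (m+1)) : ℕ) = (x:ℕ) := by
  rw [succAbove_val, if_pos h]

lemma suc_card_step {m : ℕ} (I : Finset (Fin (m+1))) (imax : Fin (m+1))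
    (hmem : imax ∈ I) (hmax : ∀ a ∈ I, (a:ℕ) ≤ (imax:ℕ))
    (hI : ∀ a ∈ I, (a:ℕ) + 1 < m + 1) :
    (univ.filter fun τ : Equiv.Perm (Fin (m+1)) => I ⊆ Suc τ).card =
    (univ.filter fun τ' : Equiv.Perm (Fin m) =>
      (univ.filter fun a : Fin m => Fin.castSucc a ∈ I.erase imax) ⊆ Suc τ').card := by
  have him : (imax:ℕ) < m := by have := hI _ hmem; omega
  set pi : Fin (m+1) := ⟨(imax:ℕ)+1, hI _ hmem⟩ with hpi
  set io : Fin m := ⟨(imax:ℕ), him⟩ with hio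
  -- forward membership
  have hFmem : ∀ τ : Equiv.Perm (Fin (m+1)), I ⊆ Suc τ →
      (univ.filter fun a : Fin m => Fin.castSucc a ∈ I.erase imax) ⊆ Suc (Fmap pi τ) := by
    intro τ hsub x hx
    simp only [mem_filter, mem_univ, true_and, Finset.mem_erase] at hx
    obtain ⟨hne, hmemI⟩ := hx
    have hxval : (x:ℕ) < (imax:ℕ) := by
      have h1 : (x:ℕ) ≤ (imax:ℕ) := by simpa using hmax _ hmemI
      rcases lt_or_eq_of_le h1 with h | h
      · exact h
      · exact absurd (Fin.ext (by simpa using h) : Fin.castSucc x = imax) hne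
    have hx1 : (x:ℕ)+1 < m := by omega
    rw [mem_Suc]
    refine ⟨⟨(x:ℕ)+1, hx1⟩, rfl, ?_⟩
    obtain ⟨j, hj1, hj2⟩ := mem_Suc.mp (hsub hmemI)
    have e1 : pi.succAbove x = Fin.castSucc x := by
      apply Fin.ext
      rw [succAbove_val_lt pi x (show (x:ℕ) < (imax:ℕ)+1 by omega)]
      simp
    have e2 : pi.succAbove ⟨(x:ℕ)+1, hx1⟩ = j := by
      apply Fin.ext
      rw [succAbove_val_lt pi ⟨(x:ℕ)+1, hx1⟩ (show (x:ℕ)+1 < (imax:ℕ)+1 by omega)]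
      rw [hj1]; simp
    have h1 := Fmap_val pi τ x
    have h2 := Fmap_val pi τ ⟨(x:ℕ)+1, hx1⟩
    rw [e1] at h1; rw [e2] at h2
    apply succAbove_succ_of (τ pi)
    rw [← h1, ← h2]
    simpa using hj2
  -- backward membership
  have hGmem : ∀ τ' : Equiv.Perm (Fin m),
      (univ.filter fun a : Fin m => Fin.castSucc a ∈ I.erase imax) ⊆ Suc τ' →
      I ⊆ Suc (Gmap pi io τ') := by
    intro τ' hsub a ha
    rw [mem_Suc]
    by_cases hai : a = imax
    · refine ⟨pi, by rw [hai], ?_⟩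
      have e1 : pi.succAbove io = a := by
        apply Fin.ext
        rw [succAbove_val_lt pi io (show (imax:ℕ) < (imax:ℕ)+1 by omega), hai]
      have g2 := Gmap_succAbove pi io τ' io
      rw [e1] at g2
      rw [g2, Gmap_at]
      rw [succAbove_val_lt ((τ' io).succ) (τ' io)
        (show ((τ' io):ℕ) < ((τ' io):ℕ)+1 by omega)]
      simp [Fin.val_succ]
    · have haval : (a:ℕ) < (imax:ℕ) := lt_of_le_of_ne (hmax _ ha) (fun h => hai (Fin.ext h))
      have ham : (a:ℕ) < m := by omega
      have ha1m : (a:ℕ)+1 < m := by omega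
      have hxmem : (⟨(a:ℕ), ham⟩ : Fin m) ∈
          (univ.filter fun a : Fin m => Fin.castSucc a ∈ I.erase imax) := by
        simp only [mem_filter, mem_univ, true_and, Finset.mem_erase]
        constructor
        · intro h; apply hai; apply Fin.ext
          have := congrArg Fin.val h; simpa using this
        · have hca : Fin.castSucc (⟨(a:ℕ), ham⟩ : Fin m) = a := Fin.ext (by simp)
          rwa [hca]
      obtain ⟨j', hj'1, hj'2⟩ := mem_Suc.mp (hsub hxmem)
      have hj'x1 : j' = ⟨(a:ℕ)+1, ha1m⟩ := Fin.ext (by rw [hj'1])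
      subst hj'x1
      refine ⟨⟨(a:ℕ)+1, hI _ ha⟩, rfl, ?_⟩
      have e1 : pi.succAbove ⟨(a:ℕ), ham⟩ = a := by
        apply Fin.ext
        rw [succAbove_val_lt pi ⟨(a:ℕ), ham⟩ (show (a:ℕ) < (imax:ℕ)+1 by omega)]
      have e2 : pi.succAbove ⟨(a:ℕ)+1, ha1m⟩ = ⟨(a:ℕ)+1, hI _ ha⟩ := by
        apply Fin.ext
        rw [succAbove_val_lt pi ⟨(a:ℕ)+1, ha1m⟩ (show (a:ℕ)+1 < (imax:ℕ)+1 by omega)]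
      have g1 := Gmap_succAbove pi io τ' ⟨(a:ℕ), ham⟩
      have g2 := Gmap_succAbove pi io τ' ⟨(a:ℕ)+1, ha1m⟩
      rw [e1] at g1; rw [e2] at g2
      rw [g1, g2]
      apply succAbove_succ_of'
      · simpa using hj'2
      · simp only [Fin.val_succ]
        intro h
        have h2 : τ' ⟨(a:ℕ), ham⟩ = τ' io := Fin.ext (by omega)
        have h3 := congrArg Fin.val (τ'.injective h2)
        simp [hio] at h3
        omega
  -- left inverse
  have hGF : ∀ τ : Equiv.Perm (Fin (m+1)), I ⊆ Suc τ → Gmap pi io (Fmap pi τ) = τ := by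
    intro τ hsub
    apply Gmap_Fmap
    obtain ⟨j, hj1, hj2⟩ := mem_Suc.mp (hsub hmem)
    have hjpi : j = pi := Fin.ext (by rw [hj1])
    subst hjpi
    have e1 : pi.succAbove io = imax := by
      apply Fin.ext
      rw [succAbove_val_lt pi io (show (imax:ℕ) < (imax:ℕ)+1 by omega)]
    have h1 := Fmap_val pi τ io
    rw [e1] at h1
    have hsv : ((τ pi).succAbove (Fmap pi τ io) : ℕ) = (τ imax : ℕ) := by rw [← h1]
    rw [succAbove_val] at hsv
    apply Fin.ext
    simp only [Fin.val_succ]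
    split_ifs at hsv <;> omega
  exact Finset.card_bij' (fun τ _ => Fmap pi τ) (fun τ' _ => Gmap pi io τ')
    (fun τ hτ => by
      simp only [mem_filter, mem_univ, true_and] at hτ ⊢
      exact hFmem τ hτ)
    (fun τ' hτ' => by
      simp only [mem_filter, mem_univ, true_and] at hτ' ⊢
      exact hGmem τ' hτ')
    (fun τ hτ => by
      simp only [mem_filter, mem_univ, true_and] at hτ
      exact hGF τ hτ)
    (fun τ' hτ' => Fmap_Gmap pi io τ')

lemma suc_superset_count : ∀ (k n : ℕ) (I : Finset (Fin n)), I.card = k →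
    (∀ a ∈ I, (a:ℕ) + 1 < n) →
    (univ.filter fun τ : Equiv.Perm (Fin n) => I ⊆ Suc τ).card = Nat.factorial (n - k) := by
  intro k
  induction k with
  | zero =>
    intro n I hcard _
    rw [Finset.card_eq_zero] at hcard
    subst hcard
    rw [Finset.filter_true_of_mem (fun _ _ => by simp)]
    simp [Finset.card_univ, Fintype.card_perm, Fintype.card_fin]
  | succ k ih =>
    intro n I hcard hI
    have hne : I.Nonempty := Finset.card_pos.mp (by omega)
    obtain ⟨m, rfl⟩ : ∃ m, n = m + 1 := by
      cases n with
      | zero => exact absurd hne.choose.isLt (by simp)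
      | succ m => exact ⟨m, rfl⟩
    set imax := I.max' hne with himax
    have hmem : imax ∈ I := I.max'_mem hne
    have hmax : ∀ a ∈ I, (a:ℕ) ≤ (imax:ℕ) := fun a ha => I.le_max' a ha
    have him : (imax:ℕ) < m := by have := hI _ hmem; omega
    rw [suc_card_step I imax hmem hmax hI]
    have hI' : ∀ a ∈ (univ.filter fun a : Fin m => Fin.castSucc a ∈ I.erase imax),
        (a:ℕ)+1 < m := by
      intro a ha
      simp only [mem_filter, mem_univ, true_and, Finset.mem_erase] at ha
      obtain ⟨hne2, hmem2⟩ := ha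
      have : (a:ℕ) < (imax:ℕ) := lt_of_le_of_ne (by simpa using hmax _ hmem2)
        (fun h => hne2 (Fin.ext (by simpa using h)))
      omega
    have hcard' : (univ.filter fun a : Fin m => Fin.castSucc a ∈ I.erase imax).card = k := by
      have hbij : (univ.filter fun a : Fin m => Fin.castSucc a ∈ I.erase imax).card
          = (I.erase imax).card := by
        apply Finset.card_bij (fun a _ => Fin.castSucc a)
        · intro a ha; simpa using ha
        · intro a1 _ a2 _ h; exact Fin.castSucc_injective m h
        · intro b hb
          have hbm : (b:ℕ) < m := by
            have hb' := Finset.mem_of_mem_erase hb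
            have := hmax _ hb'
            have hbne : (b:ℕ) ≠ (imax:ℕ) := fun h =>
              (Finset.ne_of_mem_erase hb) (Fin.ext h)
            omega
          refine ⟨⟨(b:ℕ), hbm⟩, ?_, Fin.ext (by simp)⟩
          simp only [mem_filter, mem_univ, true_and]
          have hcb : Fin.castSucc (⟨(b:ℕ), hbm⟩ : Fin m) = b := Fin.ext (by simp)
          rwa [hcb]
      rw [hbij, Finset.card_erase_of_mem hmem, hcard]
      omega
    rw [ih m _ hcard' hI']
    congr 1
    omega

lemma fixbar_superset_count (n : ℕ) (I : Finset (Fin n)) :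
    (univ.filter fun σ : Equiv.Perm (Fin n) => ∀ a ∈ I, σ a = a).card = Nat.factorial (n - I.card) := by
  classical
  have h1 : (univ.filter fun σ : Equiv.Perm (Fin n) => ∀ a ∈ I, σ a = a).card
      = Fintype.card {σ : Equiv.Perm (Fin n) // ∀ a ∈ I, σ a = a} :=
    (Fintype.card_subtype _).symm
  rw [h1]
  have e : Equiv.Perm {x : Fin n // ¬ x ∈ I} ≃ {σ : Equiv.Perm (Fin n) // ∀ a ∈ I, σ a = a} :=
    (Equiv.Perm.subtypeEquivSubtypePerm (fun x => ¬ x ∈ I)).trans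
      (Equiv.subtypeEquivRight (by
        intro σ
        constructor
        · intro h a ha; exact h a (not_not.mpr ha)
        · intro h a ha; exact h a (not_not.mp ha)))
  rw [← Fintype.card_congr e, Fintype.card_perm]
  congr 1
  rw [Fintype.card_subtype]
  rw [Finset.filter_not]
  have : Finset.univ.filter (fun x : Fin n => x ∈ I) = I := by
    ext x; simp
  rw [this, Finset.card_sdiff_of_subset (Finset.subset_univ I)]
  simp

lemma fiber_sum {n : ℕ} (S : Equiv.Perm (Fin n) → Finset (Fin n)) (T : Finset (Fin n))
    (hS : ∀ τ, S τ ⊆ T) (I : Finset (Fin n)) :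
    (univ.filter fun τ => I ⊆ S τ).card =
      ∑ J ∈ T.powerset.filter (fun J => I ⊆ J), (univ.filter fun τ => S τ = J).card := by
  classical
  rw [Finset.card_eq_sum_card_fiberwise (f := S)
    (t := T.powerset.filter (fun J => I ⊆ J))
    (fun τ hτ => by
      simp only [Finset.coe_filter, Set.mem_setOf_eq, mem_filter, mem_univ, true_and] at hτ
      simp only [Finset.mem_coe, mem_filter, Finset.mem_powerset]
      exact ⟨hS τ, hτ⟩)]
  apply Finset.sum_congr rfl
  intro J hJ
  simp only [mem_filter, Finset.mem_powerset] at hJ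
  congr 1
  rw [Finset.filter_filter]
  apply Finset.filter_congr
  intro τ _
  constructor
  · exact fun h => h.2
  · exact fun h => ⟨h ▸ hJ.2, h⟩

lemma Suc_subset {n : ℕ} (τ : Equiv.Perm (Fin n)) :
    Suc τ ⊆ univ.filter (fun i : Fin n => (i:ℕ)+1 < n) := by
  intro i hi
  rw [mem_Suc] at hi
  obtain ⟨j, hj1, -⟩ := hi
  simp only [mem_filter, mem_univ, true_and]
  rw [← hj1]
  exact j.isLt

lemma Fixbar_subset {n : ℕ} (σ : Equiv.Perm (Fin n)) :
    Fixbar σ ⊆ univ.filter (fun i : Fin n => (i:ℕ)+1 < n) := by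
  intro i hi
  simp only [Fixbar, mem_filter, mem_univ, true_and] at hi ⊢
  exact hi.1

lemma fixbar_subset_iff {n : ℕ} (σ : Equiv.Perm (Fin n)) (I : Finset (Fin n))
    (hI : ∀ a ∈ I, (a:ℕ)+1 < n) :
    I ⊆ Fixbar σ ↔ ∀ a ∈ I, σ a = a := by
  constructor
  · intro h a ha
    have := h ha
    simp only [Fixbar, mem_filter, mem_univ, true_and] at this
    exact this.2
  · intro h a ha
    simp only [Fixbar, mem_filter, mem_univ, true_and]
    exact ⟨hI a ha, h a ha⟩

lemma exact_eq {n : ℕ} : ∀ (d : ℕ) (I : Finset (Fin n)),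
    ((univ.filter fun i : Fin n => (i:ℕ)+1 < n) \ I).card ≤ d →
    I ⊆ (univ.filter fun i : Fin n => (i:ℕ)+1 < n) →
    (univ.filter fun τ : Equiv.Perm (Fin n) => Suc τ = I).card =
    (univ.filter fun σ : Equiv.Perm (Fin n) => Fixbar σ = I).card := by
  classical
  set T := (univ.filter fun i : Fin n => (i:ℕ)+1 < n) with hT
  intro d
  induction d with
  | zero =>
    intro I hd hIT
    have hempty : (T.powerset.filter (fun J => I ⊆ J)).erase I = ∅ := by
      apply Finset.eq_empty_of_forall_notMem
      intro J hJ
      rw [Finset.mem_erase, mem_filter, Finset.mem_powerset] at hJ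
      obtain ⟨hne, hJT, hIJ⟩ := hJ
      apply hne
      apply Finset.Subset.antisymm _ hIJ
      intro x hx
      by_contra hxI
      have hmm : x ∈ T \ I := Finset.mem_sdiff.mpr ⟨hJT hx, hxI⟩
      rw [Finset.card_eq_zero.mp (Nat.le_zero.mp hd)] at hmm
      exact absurd hmm (Finset.notMem_empty x)
    have hImem : I ∈ T.powerset.filter (fun J => I ⊆ J) := by
      simp only [mem_filter, Finset.mem_powerset]
      exact ⟨hIT, Finset.Subset.refl I⟩
    have h1 := fiber_sum Suc T Suc_subset I
    have h2 := fiber_sum Fixbar T Fixbar_subset I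
    rw [← Finset.add_sum_erase _ _ hImem, hempty] at h1 h2
    simp only [Finset.sum_empty, add_zero] at h1 h2
    have hIprop : ∀ a ∈ I, (a:ℕ)+1 < n := by
      intro a ha
      have := hIT ha
      simp only [hT, mem_filter, mem_univ, true_and] at this
      exact this
    have hNS : (univ.filter fun τ : Equiv.Perm (Fin n) => I ⊆ Suc τ).card
        = Nat.factorial (n - I.card) := suc_superset_count I.card n I rfl hIprop
    have hNF : (univ.filter fun σ : Equiv.Perm (Fin n) => I ⊆ Fixbar σ).card
        = Nat.factorial (n - I.card) := by
      rw [Finset.filter_congr (fun σ _ => fixbar_subset_iff σ I hIprop)]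
      exact fixbar_superset_count n I
    omega
  | succ d ih =>
    intro I hd hIT
    have hImem : I ∈ T.powerset.filter (fun J => I ⊆ J) := by
      simp only [mem_filter, Finset.mem_powerset]
      exact ⟨hIT, Finset.Subset.refl I⟩
    have h1 := fiber_sum Suc T Suc_subset I
    have h2 := fiber_sum Fixbar T Fixbar_subset I
    rw [← Finset.add_sum_erase _ _ hImem] at h1 h2
    have hIprop : ∀ a ∈ I, (a:ℕ)+1 < n := by
      intro a ha
      have := hIT ha
      simp only [hT, mem_filter, mem_univ, true_and] at this
      exact this
    have hNS : (univ.filter fun τ : Equiv.Perm (Fin n) => I ⊆ Suc τ).card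
        = Nat.factorial (n - I.card) := suc_superset_count I.card n I rfl hIprop
    have hNF : (univ.filter fun σ : Equiv.Perm (Fin n) => I ⊆ Fixbar σ).card
        = Nat.factorial (n - I.card) := by
      rw [Finset.filter_congr (fun σ _ => fixbar_subset_iff σ I hIprop)]
      exact fixbar_superset_count n I
    have hsums : ∑ J ∈ (T.powerset.filter (fun J => I ⊆ J)).erase I,
          (univ.filter fun τ : Equiv.Perm (Fin n) => Suc τ = J).card
        = ∑ J ∈ (T.powerset.filter (fun J => I ⊆ J)).erase I,
          (univ.filter fun σ : Equiv.Perm (Fin n) => Fixbar σ = J).card := by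
      apply Finset.sum_congr rfl
      intro J hJ
      rw [Finset.mem_erase, mem_filter, Finset.mem_powerset] at hJ
      obtain ⟨hne, hJT, hIJ⟩ := hJ
      apply ih J _ hJT
      have hssub : T \ J ⊂ T \ I := by
        rw [Finset.ssubset_iff_of_subset (Finset.sdiff_subset_sdiff (Finset.Subset.refl T) hIJ)]
        obtain ⟨x, hxJ, hxI⟩ := Finset.exists_of_ssubset (lt_of_le_of_ne hIJ (Ne.symm hne))
        refine ⟨x, Finset.mem_sdiff.mpr ⟨hJT hxJ, hxI⟩, ?_⟩
        simp [hxJ]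
      have := Finset.card_lt_card hssub
      omega
    omega

end StmtAux

/-- The number of permutations of [n] with exactly k successions equals the
number of permutations of [n] with exactly k fixed points among the first
n-1 positions. -/
theorem stmt_8 (n : ℕ) (hn : 1 ≤ n) (k : ℕ) (hk : k ≤ n - 1) :
    ((Finset.univ : Finset (Equiv.Perm (Fin n))).filter (fun σ => (Suc σ).card = k)).card =
    ((Finset.univ : Finset (Equiv.Perm (Fin n))).filter (fun σ => (Fixbar σ).card = k)).card := by
  classical
  set T := (univ.filter fun i : Fin n => (i:ℕ)+1 < n) with hT
  have key : ∀ (S : Equiv.Perm (Fin n) → Finset (Fin n)), (∀ τ, S τ ⊆ T) →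
      (univ.filter fun τ : Equiv.Perm (Fin n) => (S τ).card = k).card
        = ∑ J ∈ Finset.powersetCard k T, (univ.filter fun τ => S τ = J).card := by
    intro S hS
    rw [Finset.card_eq_sum_card_fiberwise (f := S) (t := Finset.powersetCard k T)
      (fun τ hτ => by
        simp only [Finset.coe_filter, Set.mem_setOf_eq, mem_filter, mem_univ, true_and] at hτ
        rw [Finset.mem_coe, Finset.mem_powersetCard]
        exact ⟨hS τ, hτ⟩)]
    apply Finset.sum_congr rfl
    intro J hJ
    rw [Finset.mem_powersetCard] at hJ
    congr 1
    rw [Finset.filter_filter]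
    apply Finset.filter_congr
    intro τ _
    constructor
    · exact fun h => h.2
    · exact fun h => ⟨h ▸ hJ.2, h⟩
  rw [key Suc Suc_subset, key Fixbar Fixbar_subset]
  apply Finset.sum_congr rfl
  intro J hJ
  rw [Finset.mem_powersetCard] at hJ
  exact exact_eq (T \ J).card J (le_refl _) hJ.1
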